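/- Let G1, G2 ∈ ℝ^{n×n} be symmetric positive definite matrices, and set R1 = chol(G1), R2 = chol(G2), R3 = chol(G1 + G2). Then for every i = 1, 2, …, n, λ_i(R3) ≥ max{ √(λ_i(R1)² + λ_1(R2)²), √(λ_i(R2)² + λ_1(R1)²) }. -/

import Mathlib

open Matrix

noncomputable section

/-- Euclidean norm of a real vector. -/
def euclNorm {m : ℕ} (x : Fin m → ℝ) : ℝ := Real.sqrt (∑ k, x k ^ 2)

/-- The lattice vector `A z` for an integer vector `z`. -/
def latticeVec {m n : ℕ} (A : Matrix (Fin m) (Fin n) ℝ) (z : Fin n → ℤ) : Fin m → ℝ :=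
  A.mulVec fun k => (z k : ℝ)

/-- The `i`-th successive minimum of the lattice generated by `A`: the smallest `r ≥ 0` such
that the closed ball of radius `r` centered at the origin contains `i` linearly independent
lattice vectors. -/
def succMin {m n : ℕ} (A : Matrix (Fin m) (Fin n) ℝ) (i : ℕ) : ℝ :=
  sInf {r : ℝ | 0 ≤ r ∧ ∃ v : Fin i → (Fin n → ℤ),
    LinearIndependent ℝ (fun j => latticeVec A (v j)) ∧
    ∀ j, euclNorm (latticeVec A (v j)) ≤ r}

/-- `R` is the Cholesky factor of `G`: `R` is upper triangular with positive diagonal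
entries and `Rᵀ * R = G`. -/
def IsCholesky {n : ℕ} (G R : Matrix (Fin n) (Fin n) ℝ) : Prop :=
  R.BlockTriangular id ∧ (∀ j, 0 < R j j) ∧ Rᵀ * R = G

lemma euclNorm_nonneg {m : ℕ} (x : Fin m → ℝ) : 0 ≤ euclNorm x := Real.sqrt_nonneg _

lemma sq_euclNorm {m : ℕ} (x : Fin m → ℝ) : euclNorm x ^ 2 = ∑ k, x k ^ 2 :=
  Real.sq_sqrt (Finset.sum_nonneg fun k _ => sq_nonneg _)

lemma sq_euclNorm_mulVec {n : ℕ} (A : Matrix (Fin n) (Fin n) ℝ) (x : Fin n → ℝ) :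
    euclNorm (A.mulVec x) ^ 2 = x ⬝ᵥ (Aᵀ * A).mulVec x := by
  rw [sq_euclNorm, ← Matrix.mulVec_mulVec, Matrix.dotProduct_mulVec, Matrix.vecMul_transpose]
  simp [dotProduct, sq]

lemma mulVec_inj {n : ℕ} {R : Matrix (Fin n) (Fin n) ℝ}
    (h : R.BlockTriangular id) (hd : ∀ j, 0 < R j j) :
    Function.Injective R.mulVec := by
  have hdet : R.det ≠ 0 := by
    rw [Matrix.det_of_upperTriangular h]
    exact (Finset.prod_pos fun j _ => hd j).ne'
  intro x y hxy
  have h2 := congrArg (R⁻¹.mulVec) hxy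
  rwa [Matrix.mulVec_mulVec, Matrix.mulVec_mulVec,
    Matrix.nonsing_inv_mul _ (isUnit_iff_ne_zero.mpr hdet),
    Matrix.one_mulVec, Matrix.one_mulVec] at h2

lemma succMin_nonneg {m n : ℕ} (A : Matrix (Fin m) (Fin n) ℝ) (i : ℕ) : 0 ≤ succMin A i :=
  Real.sInf_nonneg fun _ hr => hr.1

lemma succMin_le {m n : ℕ} (A : Matrix (Fin m) (Fin n) ℝ) {i : ℕ} {r : ℝ} (hr : 0 ≤ r)
    (v : Fin i → (Fin n → ℤ)) (hli : LinearIndependent ℝ (fun j => latticeVec A (v j)))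
    (hb : ∀ j, euclNorm (latticeVec A (v j)) ≤ r) : succMin A i ≤ r :=
  csInf_le ⟨0, fun _ hx => hx.1⟩ ⟨hr, v, hli, hb⟩

lemma succMin_one_le {m n : ℕ} (A : Matrix (Fin m) (Fin n) ℝ) (z : Fin n → ℤ)
    (hz : latticeVec A z ≠ 0) : succMin A 1 ≤ euclNorm (latticeVec A z) :=
  succMin_le A (euclNorm_nonneg _) (fun _ => z)
    (linearIndependent_unique_iff.mpr hz) (fun _ => le_rfl)

lemma S_nonempty {n : ℕ} {R : Matrix (Fin n) (Fin n) ℝ} (hinj : Function.Injective R.mulVec)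
    (i : ℕ) (hin : i ≤ n) :
    {r : ℝ | 0 ≤ r ∧ ∃ v : Fin i → (Fin n → ℤ),
      LinearIndependent ℝ (fun j => latticeVec R (v j)) ∧
      ∀ j, euclNorm (latticeVec R (v j)) ≤ r}.Nonempty := by
  set v : Fin i → Fin n → ℤ := fun j k => if k = Fin.castLE hin j then 1 else 0 with hv
  have hvr : ∀ j, (fun k => ((v j k : ℤ) : ℝ)) =
      Pi.single (M := fun _ : Fin n => ℝ) (Fin.castLE hin j) 1 := by
    intro j; funext k; simp [hv, Pi.single_apply]
  have hli0 : LinearIndependent ℝ fun j : Fin i =>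
      Pi.single (M := fun _ : Fin n => ℝ) (Fin.castLE hin j) (1 : ℝ) := by
    have h2 := (Pi.basisFun ℝ (Fin n)).linearIndependent.comp (Fin.castLE hin)
      (Fin.castLE_injective hin)
    have : (⇑(Pi.basisFun ℝ (Fin n)) ∘ Fin.castLE hin) =
        fun j : Fin i => Pi.single (M := fun _ : Fin n => ℝ) (Fin.castLE hin j) (1 : ℝ) := by
      funext j
      simp [Function.comp, Pi.basisFun_apply]
    rwa [this] at h2
  have hker : LinearMap.ker (Matrix.mulVecLin R) = ⊥ := by
    rw [LinearMap.ker_eq_bot]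
    exact hinj
  have hli : LinearIndependent ℝ fun j => latticeVec R (v j) := by
    have h3 := hli0.map' (Matrix.mulVecLin R) hker
    have : (fun j => latticeVec R (v j)) =
        fun j => Matrix.mulVecLin R (Pi.single (M := fun _ : Fin n => ℝ) (Fin.castLE hin j) 1) := by
      funext j; rw [← hvr j]; rfl
    rw [this]; exact h3
  exact ⟨∑ j, euclNorm (latticeVec R (v j)),
    Finset.sum_nonneg fun j _ => euclNorm_nonneg _, v, hli,
    fun j => Finset.single_le_sum (f := fun j => euclNorm (latticeVec R (v j)))
      (fun j _ => euclNorm_nonneg _) (Finset.mem_univ j)⟩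

lemma key_identity {n : ℕ} {G1 G2 R1 R2 R3 : Matrix (Fin n) (Fin n) ℝ}
    (hR1 : IsCholesky G1 R1) (hR2 : IsCholesky G2 R2) (hR3 : IsCholesky (G1 + G2) R3)
    (x : Fin n → ℝ) :
    euclNorm (R3.mulVec x) ^ 2 = euclNorm (R1.mulVec x) ^ 2 + euclNorm (R2.mulVec x) ^ 2 := by
  rw [sq_euclNorm_mulVec, sq_euclNorm_mulVec, sq_euclNorm_mulVec,
    hR1.2.2, hR2.2.2, hR3.2.2, Matrix.add_mulVec, dotProduct_add]

lemma main_bound {n : ℕ} {G1 G2 R1 R2 R3 : Matrix (Fin n) (Fin n) ℝ}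
    (hR1 : IsCholesky G1 R1) (hR2 : IsCholesky G2 R2) (hR3 : IsCholesky (G1 + G2) R3)
    (i : ℕ) (h1 : 1 ≤ i) (hin : i ≤ n) :
    Real.sqrt (succMin R1 i ^ 2 + succMin R2 1 ^ 2) ≤ succMin R3 i := by
  have hinj1 := mulVec_inj hR1.1 hR1.2.1
  have hinj2 := mulVec_inj hR2.1 hR2.2.1
  have hinj3 := mulVec_inj hR3.1 hR3.2.1
  apply le_csInf (S_nonempty hinj3 i hin)
  rintro r ⟨hr0, v, hli3, hb⟩
  set x : Fin i → Fin n → ℝ := fun j k => (v j k : ℝ) with hxdef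
  have hx : LinearIndependent ℝ x := by
    apply LinearIndependent.of_comp (Matrix.mulVecLin R3)
    exact hli3
  have hker1 : LinearMap.ker (Matrix.mulVecLin R1) = ⊥ := by
    rw [LinearMap.ker_eq_bot]; exact hinj1
  have hli1 : LinearIndependent ℝ (fun j => latticeVec R1 (v j)) :=
    hx.map' (Matrix.mulVecLin R1) hker1
  have hxne : ∀ j, x j ≠ 0 := fun j => hx.ne_zero j
  have hL2 : ∀ j, succMin R2 1 ≤ euclNorm (latticeVec R2 (v j)) := by
    intro j
    apply succMin_one_le
    intro h0
    apply hxne j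
    apply hinj2
    rw [show R2.mulVec (x j) = latticeVec R2 (v j) from rfl, h0]
    simp [Matrix.mulVec_zero]
  have hsq : ∀ j, euclNorm (latticeVec R1 (v j)) ^ 2 ≤ r ^ 2 - succMin R2 1 ^ 2 := by
    intro j
    have h3 : euclNorm (latticeVec R3 (v j)) ^ 2 ≤ r ^ 2 :=
      pow_le_pow_left₀ (euclNorm_nonneg _) (hb j) 2
    have h2 : succMin R2 1 ^ 2 ≤ euclNorm (latticeVec R2 (v j)) ^ 2 :=
      pow_le_pow_left₀ (succMin_nonneg _ _) (hL2 j) 2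
    have hk := key_identity hR1 hR2 hR3 (x j)
    have hk' : euclNorm (latticeVec R3 (v j)) ^ 2 =
        euclNorm (latticeVec R1 (v j)) ^ 2 + euclNorm (latticeVec R2 (v j)) ^ 2 := hk
    linarith
  have hmem : succMin R1 i ≤ Real.sqrt (r ^ 2 - succMin R2 1 ^ 2) := by
    refine succMin_le R1 (Real.sqrt_nonneg _) v hli1 (fun j => ?_)
    calc euclNorm (latticeVec R1 (v j))
        = Real.sqrt (euclNorm (latticeVec R1 (v j)) ^ 2) :=
          (Real.sqrt_sq (euclNorm_nonneg _)).symm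
      _ ≤ Real.sqrt (r ^ 2 - succMin R2 1 ^ 2) := Real.sqrt_le_sqrt (hsq j)
  have j0 : Fin i := ⟨0, h1⟩
  have hnn : 0 ≤ r ^ 2 - succMin R2 1 ^ 2 := le_trans (sq_nonneg _) (hsq j0)
  have hkey : succMin R1 i ^ 2 + succMin R2 1 ^ 2 ≤ r ^ 2 := by
    have h4 := pow_le_pow_left₀ (succMin_nonneg _ _) hmem 2
    rw [Real.sq_sqrt hnn] at h4
    linarith
  calc Real.sqrt (succMin R1 i ^ 2 + succMin R2 1 ^ 2)
      ≤ Real.sqrt (r ^ 2) := Real.sqrt_le_sqrt hkey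
    _ = r := Real.sqrt_sq hr0

theorem statement0 {n : ℕ} (G1 G2 R1 R2 R3 : Matrix (Fin n) (Fin n) ℝ)
    (hG1 : G1.PosDef) (hG2 : G2.PosDef)
    (hR1 : IsCholesky G1 R1) (hR2 : IsCholesky G2 R2) (hR3 : IsCholesky (G1 + G2) R3) :
    ∀ i : ℕ, 1 ≤ i → i ≤ n →
      succMin R3 i ≥
        max (Real.sqrt (succMin R1 i ^ 2 + succMin R2 1 ^ 2))
            (Real.sqrt (succMin R2 i ^ 2 + succMin R1 1 ^ 2)) := by
  intro i h1 hin
  have hR3' : IsCholesky (G2 + G1) R3 := by rwa [add_comm]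
  exact max_le (main_bound hR1 hR2 hR3 i h1 hin) (main_bound hR2 hR1 hR3' i h1 hin)
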